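/- (ℓ_q-RUB implies robust rank NSP for ℓ_q bound) Let 0 < p ≤ q ≤ 1, r ∈ ℤ₊, k > 1 with kr ∈ ℤ₊. If 𝒜 : ℝ^{m×n} → ℝ^L satisfies the ℓ_q-RUB of order (k+1)r with constants C₁, C₂ satisfying C₂/C₁ < k^{(1/p−1/2)q}, then for every X ∈ ℝ^{m×n}: ‖X_{max(r)}‖_{S_2}^p ≤ (C₁L)^{−p/q} ‖𝒜(X)‖_q^p + (C₂/(C₁ k^{(1/p−1/2)q}))^{p/q} · ‖X_{−max(r)}‖_{S_p}^p / r^{(1/p−1/2)p}. -/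

import Mathlib

open scoped BigOperators

/-- The descending rearrangement of a finite tuple of reals. -/
noncomputable def sortDesc {N : ℕ} (f : Fin N → ℝ) : Fin N → ℝ :=
  fun j => f (Tuple.sort f j.rev)

theorem Matrix.isHermitian_transpose_mul_self {m n : ℕ} (A : Matrix (Fin m) (Fin n) ℝ) :
    (A.transpose * A).IsHermitian := by
  simpa [Matrix.conjTranspose_eq_transpose_of_trivial] using
    Matrix.isHermitian_conjTranspose_mul_self A

/-- The singular values of a real matrix, in nonincreasing order:
`singVal A j` is the `(j+1)`-st largest singular value of `A`. -/
noncomputable def singVal {m n : ℕ} (A : Matrix (Fin m) (Fin n) ℝ) : Fin n → ℝ :=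
  sortDesc (fun i => Real.sqrt ((Matrix.isHermitian_transpose_mul_self A).eigenvalues i))

/-- `schattenP A p = ‖A‖_{S_p}^p`, the sum of the `p`-th powers of the singular values. -/
noncomputable def schattenP {m n : ℕ} (A : Matrix (Fin m) (Fin n) ℝ) (p : ℝ) : ℝ :=
  ∑ j, (singVal A j) ^ p

/-- `headP A r p = ‖A_{max(r)}‖_{S_p}^p`, the `S_p`-quasi-norm (to the `p`) of the best
rank-`r` approximation of `A`. -/
noncomputable def headP {m n : ℕ} (A : Matrix (Fin m) (Fin n) ℝ) (r : ℕ) (p : ℝ) : ℝ :=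
  ∑ j ∈ Finset.univ.filter (fun j : Fin n => (j : ℕ) < r), (singVal A j) ^ p

/-- `tailP A r p = ‖A_{-max(r)}‖_{S_p}^p`, the `S_p`-quasi-norm (to the `p`) of the error
of the best rank-`r` approximation of `A`. -/
noncomputable def tailP {m n : ℕ} (A : Matrix (Fin m) (Fin n) ℝ) (r : ℕ) (p : ℝ) : ℝ :=
  ∑ j ∈ Finset.univ.filter (fun j : Fin n => r ≤ (j : ℕ)), (singVal A j) ^ p


lemma rpow_add_le_aux (x y : ℝ) {e : ℝ} (hx : 0 ≤ x) (hy : 0 ≤ y) (he : 0 ≤ e) (he1 : e ≤ 1) :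
    (x + y) ^ e ≤ x ^ e + y ^ e := by
  have h := NNReal.coe_le_coe.2 (NNReal.rpow_add_le_add_rpow x.toNNReal y.toNNReal he he1)
  simpa [← Real.toNNReal_add hx hy, NNReal.coe_rpow, Real.coe_toNNReal _ hx,
    Real.coe_toNNReal _ hy, Real.coe_toNNReal _ (add_nonneg hx hy)] using h

lemma add_rpow_le_aux (x y : ℝ) {e : ℝ} (hx : 0 ≤ x) (hy : 0 ≤ y) (he1 : 1 ≤ e) :
    x ^ e + y ^ e ≤ (x + y) ^ e := by
  have h := NNReal.coe_le_coe.2 (NNReal.add_rpow_le_rpow_add x.toNNReal y.toNNReal he1)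
  simpa [← Real.toNNReal_add hx hy, NNReal.coe_rpow, Real.coe_toNNReal _ hx,
    Real.coe_toNNReal _ hy, Real.coe_toNNReal _ (add_nonneg hx hy)] using h

lemma rpow_sum_le_aux {ι : Type*} (s : Finset ι) (f : ι → ℝ) (hf : ∀ i ∈ s, 0 ≤ f i)
    {e : ℝ} (he : 0 < e) (he1 : e ≤ 1) :
    (∑ i ∈ s, f i) ^ e ≤ ∑ i ∈ s, f i ^ e := by
  classical
  induction s using Finset.induction with
  | empty => simp [Real.zero_rpow he.ne']
  | @insert a s ha ih =>
    rw [Finset.sum_insert ha, Finset.sum_insert ha]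
    have h1 : 0 ≤ f a := hf a (Finset.mem_insert_self _ _)
    have h2 : ∀ i ∈ s, 0 ≤ f i := fun i hi => hf i (Finset.mem_insert_of_mem hi)
    calc (f a + ∑ i ∈ s, f i) ^ e ≤ f a ^ e + (∑ i ∈ s, f i) ^ e :=
          rpow_add_le_aux _ _ h1 (Finset.sum_nonneg h2) he.le he1
      _ ≤ f a ^ e + ∑ i ∈ s, f i ^ e := by gcongr; exact ih h2

lemma sum_rpow_le_aux {ι : Type*} (s : Finset ι) (f : ι → ℝ) (hf : ∀ i ∈ s, 0 ≤ f i)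
    {e : ℝ} (he1 : 1 ≤ e) :
    ∑ i ∈ s, f i ^ e ≤ (∑ i ∈ s, f i) ^ e := by
  classical
  induction s using Finset.induction with
  | empty => simp [Real.zero_rpow (by linarith : e ≠ 0)]
  | @insert a s ha ih =>
    rw [Finset.sum_insert ha, Finset.sum_insert ha]
    have h1 : 0 ≤ f a := hf a (Finset.mem_insert_self _ _)
    have h2 : ∀ i ∈ s, 0 ≤ f i := fun i hi => hf i (Finset.mem_insert_of_mem hi)
    calc f a ^ e + ∑ i ∈ s, f i ^ e ≤ f a ^ e + (∑ i ∈ s, f i) ^ e := by gcongr; exact ih h2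
      _ ≤ (f a + ∑ i ∈ s, f i) ^ e :=
          add_rpow_le_aux _ _ h1 (Finset.sum_nonneg h2) he1



lemma sum_sortDesc {N : ℕ} (f : Fin N → ℝ) (g : ℝ → ℝ) :
    ∑ j, g (sortDesc f j) = ∑ i, g (f i) := by
  have := Equiv.sum_comp ((Fin.revPerm).trans (Tuple.sort f)) (fun i => g (f i))
  simpa [sortDesc] using this

lemma sortDesc_antitone {N : ℕ} (f : Fin N → ℝ) : Antitone (sortDesc f) := by
  intro i j hij
  exact Tuple.monotone_sort f (by simpa [Fin.rev_le_rev] using hij)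

lemma singVal_nonneg {m n : ℕ} (A : Matrix (Fin m) (Fin n) ℝ) (j : Fin n) :
    0 ≤ singVal A j := Real.sqrt_nonneg _

lemma singVal_antitone {m n : ℕ} (A : Matrix (Fin m) (Fin n) ℝ) : Antitone (singVal A) :=
  sortDesc_antitone _

open Matrix in
lemma sum_eigenvalues_eq_trace {N : ℕ} {B : Matrix (Fin N) (Fin N) ℝ} (hB : B.IsHermitian) :
    ∑ i, hB.eigenvalues i = B.trace := by
  rw [hB.trace_eq_sum_eigenvalues]
  simp

open Matrix in
lemma sum_sq_singVal {m n : ℕ} (A : Matrix (Fin m) (Fin n) ℝ) :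
    ∑ j, singVal A j ^ (2 : ℝ) = (Aᴴ * A).trace := by
  rw [singVal, sum_sortDesc _ (fun x => x ^ (2:ℝ))]
  rw [Matrix.conjTranspose_eq_transpose_of_trivial]
  rw [← sum_eigenvalues_eq_trace (Matrix.isHermitian_transpose_mul_self A)]
  refine Finset.sum_congr rfl fun i _ => ?_
  have h0 : 0 ≤ (Matrix.isHermitian_transpose_mul_self A).eigenvalues i :=
    (Matrix.posSemidef_conjTranspose_mul_self A).eigenvalues_nonneg i
  rw [Real.rpow_two, Real.sq_sqrt h0]

open Matrix in
lemma mul_vecMulVec_right {k m n : ℕ} (G : Matrix (Fin k) (Fin m) ℝ) (a : Fin m → ℝ)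
    (b : Fin n → ℝ) : G * vecMulVec a b = vecMulVec (G *ᵥ a) b := by
  ext i j
  simp only [mul_apply, vecMulVec_apply, mulVec, dotProduct, Finset.sum_mul]
  exact Finset.sum_congr rfl fun l _ => by ring

open Matrix in
lemma vecMulVec_mul_vecMulVec {k m n : ℕ} (a : Fin m → ℝ) (b c : Fin k → ℝ) (d : Fin n → ℝ) :
    vecMulVec a b * vecMulVec c d = (b ⬝ᵥ c) • vecMulVec a d := by
  ext i j
  simp only [mul_apply, vecMulVec_apply, Matrix.smul_apply, smul_eq_mul, dotProduct, Finset.sum_mul]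
  exact Finset.sum_congr rfl fun l _ => by ring

open Matrix in
lemma trace_vecMulVec {n : ℕ} (a b : Fin n → ℝ) : (vecMulVec a b).trace = a ⬝ᵥ b := by
  simp [Matrix.trace, Matrix.diag, vecMulVec_apply, dotProduct]

open Matrix in
lemma rank_vecMulVec_le' {m n : ℕ} (a : Fin m → ℝ) (b : Fin n → ℝ) :
    (vecMulVec a b).rank ≤ 1 := by
  rw [vecMulVec_eq (ι := Fin 1)]
  exact le_trans (Matrix.rank_mul_le_left _ _) (by
    have h := Matrix.rank_le_card_width (Matrix.replicateCol (Fin 1) a); simp at h; exact h)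

open Matrix in
lemma rank_add_le' {m n : ℕ} (A B : Matrix (Fin m) (Fin n) ℝ) :
    (A + B).rank ≤ A.rank + B.rank := by
  classical
  have hle : LinearMap.range (A + B).mulVecLin ≤
      LinearMap.range A.mulVecLin ⊔ LinearMap.range B.mulVecLin := by
    rintro x ⟨y, rfl⟩
    rw [Matrix.mulVecLin_add]
    exact Submodule.add_mem_sup ⟨y, rfl⟩ ⟨y, rfl⟩
  calc (A + B).rank = Module.finrank ℝ (LinearMap.range (A + B).mulVecLin) := rfl
    _ ≤ Module.finrank ℝ ↥(LinearMap.range A.mulVecLin ⊔ LinearMap.range B.mulVecLin) :=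
        Submodule.finrank_mono hle
    _ ≤ _ := by
        exact Submodule.finrank_add_le_finrank_add_finrank
          (LinearMap.range A.mulVecLin) (LinearMap.range B.mulVecLin)
lemma hb_algebra (k rr G C₁ C₂ p q : ℝ) (hk : 0 < k) (hr : 0 < rr) (hG : 0 ≤ G)
    (hC₁ : 0 < C₁) (hC₂ : 0 < C₂) (hp : 0 < p) (hq : 0 < q) :
    ((C₂/C₁) * ((k*rr)^(q/2 - q/p) * G^(q/p)))^(p/q)
      = (C₂ / (C₁ * k ^ ((1/p - 1/2) * q)))^(p/q) * G / rr^((1/p-1/2)*p) := by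
  have hpne := hp.ne'
  have hqne := hq.ne'
  have hkr : (0:ℝ) < k * rr := by positivity
  have e1 : q/2 - q/p = (p/2 - 1) * (q/p) := by
    rw [mul_comm (p/2 - 1) (q/p), div_mul_eq_mul_div, eq_comm, div_eq_iff hpne]
    field_simp
  have e3 : (1/p - 1/2) * q = (1 - p/2) * (q/p) := by
    rw [mul_comm (1 - p/2) (q/p), div_mul_eq_mul_div, eq_comm, div_eq_iff hpne]
    field_simp
  have e4 : (1/p - 1/2) * p = 1 - p/2 := by field_simp
  have e5 : (p/2 - 1) * (q/p) * (p/q) = p/2 - 1 := by field_simp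
  have e6 : (q/p) * (p/q) = 1 := by field_simp
  have e7 : (1 - p/2) * (q/p) * (p/q) = 1 - p/2 := by field_simp
  rw [e1, e3, e4]
  have hL : ((C₂/C₁) * ((k*rr)^((p/2-1) * (q/p)) * G^(q/p)))^(p/q)
      = (C₂/C₁)^(p/q) * ((k*rr)^(p/2-1) * G) := by
    rw [Real.mul_rpow (by positivity) (mul_nonneg (by positivity) (Real.rpow_nonneg hG _)),
      Real.mul_rpow (by positivity) (Real.rpow_nonneg hG _),
      ← Real.rpow_mul hkr.le, ← Real.rpow_mul hG, e5, e6, Real.rpow_one]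
  have hR : (C₂ / (C₁ * k ^ ((1 - p/2) * (q/p))))^(p/q)
      = (C₂/C₁)^(p/q) * (k^(1 - p/2))⁻¹ := by
    rw [div_mul_eq_div_div, div_eq_mul_inv (C₂/C₁),
      Real.mul_rpow (by positivity) (by positivity),
      Real.inv_rpow (by positivity), ← Real.rpow_mul hk.le, e7]
  have hkr2 : (k*rr)^(p/2-1) = (k^(1-p/2))⁻¹ * (rr^(1-p/2))⁻¹ := by
    have h : p/2 - 1 = -(1-p/2) := by ring
    rw [h, Real.rpow_neg hkr.le, Real.mul_rpow hk.le hr.le, mul_inv]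
  rw [hL, hR, hkr2, div_eq_mul_inv]
  ring

open Matrix in
lemma exists_atoms {m n : ℕ} (X : Matrix (Fin m) (Fin n) ℝ) :
    ∃ M : Fin n → Matrix (Fin m) (Fin n) ℝ,
      (∑ j, M j) = X ∧
      (∀ B : Finset (Fin n), (∑ j ∈ B, M j).rank ≤ B.card) ∧
      (∀ B : Finset (Fin n),
        ∑ i, singVal (∑ j ∈ B, M j) i ^ (2 : ℝ) = ∑ j ∈ B, singVal X j ^ (2 : ℝ)) := by
  classical
  set hH := Matrix.isHermitian_transpose_mul_self X with hHdef
  set f : Fin n → ℝ := fun i => Real.sqrt (hH.eigenvalues i) with hf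
  set π : Equiv.Perm (Fin n) := (Fin.revPerm).trans (Tuple.sort f) with hπ
  set v : Fin n → (Fin n → ℝ) := fun j => ⇑(hH.eigenvectorBasis (π j)) with hv
  have hsing : ∀ j, singVal X j = Real.sqrt (hH.eigenvalues (π j)) := fun j => rfl
  have heignn : ∀ i, 0 ≤ hH.eigenvalues i := fun i =>
    (Matrix.posSemidef_conjTranspose_mul_self X).eigenvalues_nonneg i
  have hsq : ∀ j, singVal X j ^ (2:ℝ) = hH.eigenvalues (π j) := fun j => by
    rw [hsing j, Real.rpow_two, Real.sq_sqrt (heignn _)]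
  -- orthonormality
  have hon : ∀ i j, v i ⬝ᵥ v j = if i = j then (1:ℝ) else 0 := by
    intro i j
    have h := (orthonormal_iff_ite (𝕜 := ℝ)).mp hH.eigenvectorBasis.orthonormal (π i) (π j)
    have hin : (inner ℝ (hH.eigenvectorBasis (π i)) (hH.eigenvectorBasis (π j)) : ℝ)
        = v i ⬝ᵥ v j := by
      simp [PiLp.inner_apply, dotProduct, RCLike.inner_apply, conj_trivial, hv, mul_comm]
    rw [← hin, h]
    simp
  -- eigenvector equation
  have hGv : ∀ j, (Xᴴ * X) *ᵥ v j = hH.eigenvalues (π j) • v j := fun j =>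
    hH.mulVec_eigenvectorBasis (π j)
  -- resolution of identity
  have hvv : ∑ j, vecMulVec (v j) (v j) = (1 : Matrix (Fin n) (Fin n) ℝ) := by
    set P : Matrix (Fin n) (Fin n) ℝ := Matrix.of fun a b => v b a with hP
    have h1 : Pᵀ * P = 1 := by
      ext i j
      simp only [mul_apply, transpose_apply, hP, Matrix.of_apply, Matrix.one_apply]
      simpa [dotProduct] using hon i j
    have h2 : P * Pᵀ = 1 := mul_eq_one_comm.mp h1
    rw [← h2]
    ext a b
    simp [Matrix.sum_apply, vecMulVec_apply, mul_apply, hP]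
  refine ⟨fun j => X * vecMulVec (v j) (v j), ?_, ?_, ?_⟩
  · show (∑ j : Fin n, X * vecMulVec (v j) (v j)) = X
    rw [← Matrix.mul_sum, hvv, Matrix.mul_one]
  · intro B
    show (∑ j ∈ B, X * vecMulVec (v j) (v j)).rank ≤ B.card
    induction B using Finset.induction with
    | empty => simp
    | @insert a s ha ih =>
      rw [Finset.sum_insert ha, Finset.card_insert_of_notMem ha]
      calc (X * vecMulVec (v a) (v a) + ∑ j ∈ s, X * vecMulVec (v j) (v j)).rank
          ≤ (X * vecMulVec (v a) (v a)).rank + (∑ j ∈ s, X * vecMulVec (v j) (v j)).rank :=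
            rank_add_le' _ _
        _ ≤ 1 + s.card :=
            Nat.add_le_add (le_trans (Matrix.rank_mul_le_right _ _) (rank_vecMulVec_le' _ _)) ih
        _ = s.card + 1 := Nat.add_comm _ _
  · intro B
    show ∑ i, singVal (∑ j ∈ B, X * vecMulVec (v j) (v j)) i ^ (2:ℝ)
        = ∑ j ∈ B, singVal X j ^ (2:ℝ)
    set QB : Matrix (Fin n) (Fin n) ℝ := ∑ j ∈ B, vecMulVec (v j) (v j) with hQB
    have hYB : ∑ j ∈ B, X * vecMulVec (v j) (v j) = X * QB := by
      rw [hQB, Matrix.mul_sum]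
    have hQBH : QBᴴ = QB := by
      rw [hQB, Matrix.conjTranspose_sum]
      refine Finset.sum_congr rfl fun j _ => ?_
      ext a b
      simp [Matrix.conjTranspose_apply, vecMulVec_apply, mul_comm]
    have hQBQB : QB * QB = QB := by
      rw [hQB, Matrix.sum_mul]
      refine Finset.sum_congr rfl fun i hi => ?_
      rw [Matrix.mul_sum]
      have heq : ∀ j ∈ B, vecMulVec (v i) (v i) * vecMulVec (v j) (v j)
          = if i = j then vecMulVec (v i) (v j) else 0 := by
        intro j hj
        rw [_root_.vecMulVec_mul_vecMulVec, hon i j]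
        split <;> simp
      rw [Finset.sum_congr rfl heq, Finset.sum_ite_eq B i (fun j => vecMulVec (v i) (v j))]
      simp [hi]
    rw [hYB, sum_sq_singVal]
    have hexp : (X * QB)ᴴ * (X * QB) = QB * ((Xᴴ * X) * QB) := by
      rw [Matrix.conjTranspose_mul, hQBH]
      simp only [Matrix.mul_assoc]
    rw [hexp, Matrix.trace_mul_comm, Matrix.mul_assoc, hQBQB, hQB, Matrix.mul_sum,
      Matrix.trace_sum]
    refine Finset.sum_congr rfl fun j hj => ?_
    rw [mul_vecMulVec_right, hGv j, hsq j, _root_.trace_vecMulVec, smul_dotProduct, hon j j]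
    simp

theorem rub_implies_robust_nsp (m n L r s : ℕ) (hr : 0 < r) (hL : 0 < L)
    (k : ℝ) (hk : 1 < k) (hs : (s : ℝ) = k * r)
    (p q C₁ C₂ : ℝ) (hp : 0 < p) (hpq : p ≤ q) (hq1 : q ≤ 1)
    (hC₁ : 0 < C₁) (hC₂ : 0 < C₂)
    (hratio : C₂ / C₁ < k ^ ((1 / p - 1 / 2) * q))
    (A : Matrix (Fin m) (Fin n) ℝ →ₗ[ℝ] (Fin L → ℝ))
    (hRUB : ∀ Z : Matrix (Fin m) (Fin n) ℝ, Z.rank ≤ s + r →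
        C₁ * ((∑ j, (singVal Z j) ^ (2 : ℝ)) ^ (q / 2)) ≤ (∑ j, |A Z j| ^ q) / L ∧
        (∑ j, |A Z j| ^ q) / L ≤ C₂ * ((∑ j, (singVal Z j) ^ (2 : ℝ)) ^ (q / 2))) :
    ∀ X : Matrix (Fin m) (Fin n) ℝ,
      (∑ j ∈ Finset.univ.filter (fun j : Fin n => (j : ℕ) < r),
          (singVal X j) ^ (2 : ℝ)) ^ (p / 2)
        ≤ (C₁ * L) ^ (-(p / q)) * (∑ j, |A X j| ^ q) ^ (p / q) +
          (C₂ / (C₁ * k ^ ((1 / p - 1 / 2) * q))) ^ (p / q) *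
            tailP X r p / (r : ℝ) ^ ((1 / p - 1 / 2) * p) := by
  intro X
  classical
  obtain ⟨M, hMsum, hMrank, hMtr⟩ := exists_atoms X
  have hσnn : ∀ j, 0 ≤ singVal X j := fun j => singVal_nonneg X j
  have hq0 : 0 < q := lt_of_lt_of_le hp hpq
  have hpne : p ≠ 0 := hp.ne'
  have hqne : q ≠ 0 := hq0.ne'
  have hLR : (0:ℝ) < (L:ℝ) := by exact_mod_cast hL
  have hkpos : (0:ℝ) < k := lt_trans one_pos hk
  have hrR : (0:ℝ) < (r:ℝ) := by exact_mod_cast hr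
  have hsR : (0:ℝ) < (s:ℝ) := by rw [hs]; positivity
  have hspos : 0 < s := by exact_mod_cast hsR
  -- blocks
  set lo : ℕ → ℕ := fun i => Nat.rec 0 (fun i' _ => r + i' * s) i with hlo
  have hlo0 : lo 0 = 0 := rfl
  have hlosucc : ∀ i, lo (i+1) = r + i * s := fun i => rfl
  have hlomono : Monotone lo := by
    apply monotone_nat_of_le_succ
    intro i
    cases i with
    | zero => simp [hlo0, hlosucc]
    | succ i' =>
      rw [hlosucc, hlosucc]
      have : i' * s ≤ (i'+1) * s := Nat.mul_le_mul_right s (by omega)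
      omega
  set T : ℕ → Finset (Fin n) :=
    fun i => Finset.univ.filter (fun j : Fin n => lo i ≤ (j:ℕ) ∧ (j:ℕ) < lo (i+1)) with hT
  set W : ℕ → Matrix (Fin m) (Fin n) ℝ := fun i => ∑ j ∈ T i, M j with hW
  set N := n + 2 with hN
  -- card bounds
  have hcard_le : ∀ i, (T i).card ≤ lo (i+1) - lo i := by
    intro i
    have hmaps : ∀ j ∈ T i, (j:ℕ) - lo i ∈ Finset.range (lo (i+1) - lo i) := by
      intro j hj
      simp only [hT, Finset.mem_filter, Finset.mem_univ, true_and] at hj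
      simp only [Finset.mem_range]
      omega
    have hinj : Set.InjOn (fun j : Fin n => (j:ℕ) - lo i) (T i) := by
      intro x hx y hy hxy
      simp only [hT, Finset.mem_coe, Finset.mem_filter, Finset.mem_univ, true_and] at hx hy
      have hxy2 : (x:ℕ) - lo i = (y:ℕ) - lo i := hxy
      exact Fin.ext (by omega)
    simpa using Finset.card_le_card_of_injOn _ hmaps hinj
  have hcard_eq : ∀ i, lo (i+1) ≤ n → (T i).card = lo (i+1) - lo i := by
    intro i hin
    have h1 : (T i).card = (Finset.image Fin.val (T i)).card :=
      (Finset.card_image_of_injective _ Fin.val_injective).symm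
    have himg : Finset.image Fin.val (T i) = Finset.Ico (lo i) (lo (i+1)) := by
      ext x
      simp only [hT, Finset.mem_image, Finset.mem_filter, Finset.mem_univ, true_and,
        Finset.mem_Ico]
      constructor
      · rintro ⟨j, ⟨h1, h2⟩, rfl⟩; exact ⟨h1, h2⟩
      · rintro ⟨h1, h2⟩; exact ⟨⟨x, lt_of_lt_of_le h2 hin⟩, ⟨h1, h2⟩, rfl⟩
    rw [h1, himg, Nat.card_Ico]
  have hcardT0 : (T 0).card ≤ r := by
    refine le_trans (hcard_le 0) ?_
    rw [hlosucc, hlo0]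
    omega
  have hcardTs : ∀ i, 1 ≤ i → (T i).card ≤ s := by
    intro i hi
    refine le_trans (hcard_le i) ?_
    obtain ⟨i', rfl⟩ : ∃ i', i = i' + 1 := ⟨i - 1, by omega⟩
    rw [hlosucc, hlosucc]
    have : (i'+1) * s = i' * s + s := by ring
    omega
  have hTdisj : ∀ i i', i < i' → Disjoint (T i) (T i') := by
    intro i i' hii
    rw [Finset.disjoint_left]
    intro j hj hj'
    simp only [hT, Finset.mem_filter, Finset.mem_univ, true_and] at hj hj'
    have := hlomono (show i + 1 ≤ i' by omega)
    omega
  -- partial sums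
  have hpartial : ∀ (K : ℕ), ∑ i ∈ Finset.range K, W i
      = ∑ j ∈ Finset.univ.filter (fun j : Fin n => (j:ℕ) < lo K), M j := by
    intro K
    induction K with
    | zero => simp [hlo0]
    | succ K ih =>
      have hset : Finset.univ.filter (fun j : Fin n => (j:ℕ) < lo (K+1))
          = Finset.univ.filter (fun j : Fin n => (j:ℕ) < lo K) ∪ T K := by
        ext j
        have := hlomono (show K ≤ K + 1 by omega)
        simp only [hT, Finset.mem_union, Finset.mem_filter, Finset.mem_univ, true_and]
        omega
      have hd : Disjoint (Finset.univ.filter (fun j : Fin n => (j:ℕ) < lo K)) (T K) := by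
        rw [Finset.disjoint_left]
        intro j hj hj'
        simp only [hT, Finset.mem_filter, Finset.mem_univ, true_and] at hj hj'
        omega
      rw [Finset.sum_range_succ, ih, hset, Finset.sum_union hd]
  have hloN : n ≤ lo N := by
    rw [hN, hlosucc]
    have : n + 1 ≤ (n+1) * s := Nat.le_mul_of_pos_right _ hspos
    omega
  have hWX : ∑ i ∈ Finset.range N, W i = X := by
    rw [hpartial N]
    have : Finset.univ.filter (fun j : Fin n => (j:ℕ) < lo N) = Finset.univ :=
      Finset.filter_true_of_mem fun j _ => lt_of_lt_of_le j.isLt hloN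
    rw [this, hMsum]
  set Z := W 0 + W 1 with hZ
  have hZsum : Z = ∑ j ∈ T 0 ∪ T 1, M j := by
    rw [hZ, Finset.sum_union (hTdisj 0 1 one_pos)]
  have hrankZ : Z.rank ≤ s + r := by
    rw [hZsum]
    refine le_trans (hMrank _) (le_trans (Finset.card_union_le _ _) ?_)
    have h1 := hcardTs 1 le_rfl
    omega
  have hZlow := (hRUB Z hrankZ).1
  have hhead : ∑ j ∈ T 0, singVal X j ^ (2:ℝ) ≤ ∑ i, singVal Z i ^ (2:ℝ) := by
    rw [hZsum, hMtr]
    exact Finset.sum_le_sum_of_subset_of_nonneg Finset.subset_union_left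
      (fun j _ _ => Real.rpow_nonneg (hσnn j) _)
  have hAZ : ∀ t, A Z t = A X t - ∑ i ∈ Finset.Ico 2 N, A (W i) t := by
    intro t
    have hsplit : Z + ∑ i ∈ Finset.Ico 2 N, W i = X := by
      rw [← hWX, Finset.range_eq_Ico,
        ← Finset.sum_Ico_consecutive _ (by omega : 0 ≤ 2) (by omega : 2 ≤ N)]
      have h01 : ∑ i ∈ Finset.Ico 0 2, W i = W 0 + W 1 := by
        have he : Finset.Ico 0 2 = {0, 1} := by decide
        rw [he, Finset.sum_pair (by omega : (0:ℕ) ≠ 1)]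
      rw [h01, hZ]
    have h2 : A Z t + ∑ i ∈ Finset.Ico 2 N, A (W i) t = A X t := by
      have h3 := congrArg (fun Y => A Y t) hsplit
      simpa [map_add, map_sum, Finset.sum_apply, Pi.add_apply] using h3
    linarith
  have habs : ∀ t : Fin L, |A Z t| ^ q
      ≤ |A X t| ^ q + ∑ i ∈ Finset.Ico 2 N, |A (W i) t| ^ q := by
    intro t
    have h1 : |A Z t| ≤ |A X t| + ∑ i ∈ Finset.Ico 2 N, |A (W i) t| := by
      rw [hAZ t]
      refine le_trans (abs_sub _ _) ?_
      gcongr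
      exact Finset.abs_sum_le_sum_abs _ _
    calc |A Z t| ^ q ≤ (|A X t| + ∑ i ∈ Finset.Ico 2 N, |A (W i) t|) ^ q :=
          Real.rpow_le_rpow (abs_nonneg _) h1 hq0.le
      _ ≤ |A X t| ^ q + (∑ i ∈ Finset.Ico 2 N, |A (W i) t|) ^ q :=
          rpow_add_le_aux _ _ (abs_nonneg _)
            (Finset.sum_nonneg fun _ _ => abs_nonneg _) hq0.le hq1
      _ ≤ |A X t| ^ q + ∑ i ∈ Finset.Ico 2 N, |A (W i) t| ^ q :=
          add_le_add le_rfl (rpow_sum_le_aux _ _ (fun _ _ => abs_nonneg _) hq0 hq1)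
  have hsum6 : ∑ t, |A Z t| ^ q
      ≤ ∑ t, |A X t| ^ q + ∑ i ∈ Finset.Ico 2 N, ∑ t, |A (W i) t| ^ q := by
    calc ∑ t, |A Z t| ^ q
        ≤ ∑ t, (|A X t| ^ q + ∑ i ∈ Finset.Ico 2 N, |A (W i) t| ^ q) :=
          Finset.sum_le_sum fun t _ => habs t
      _ = _ := by rw [Finset.sum_add_distrib, Finset.sum_comm]
  have hW7 : ∀ i ∈ Finset.Ico 2 N, ∑ t, |A (W i) t| ^ q
      ≤ C₂ * L * (∑ j ∈ T i, singVal X j ^ (2:ℝ)) ^ (q/2) := by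
    intro i hi
    simp only [Finset.mem_Ico] at hi
    have hrk : (W i).rank ≤ s + r := by
      simp only [hW]
      refine le_trans (hMrank (T i)) ?_
      have := hcardTs i (by omega)
      omega
    have h2 := (hRUB (W i) hrk).2
    simp only [hW] at h2 ⊢
    rw [hMtr (T i), div_le_iff₀ hLR] at h2
    calc ∑ t, |A (∑ j ∈ T i, M j) t| ^ q
        ≤ C₂ * (∑ j ∈ T i, singVal X j ^ (2:ℝ)) ^ (q/2) * L := h2
      _ = C₂ * L * (∑ j ∈ T i, singVal X j ^ (2:ℝ)) ^ (q/2) := by ring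
  -- Stechkin
  have hF8 : ∀ i ∈ Finset.Ico 2 N, (∑ j ∈ T i, singVal X j ^ (2:ℝ)) ^ (q/2)
      ≤ (s:ℝ)^(q/2 - q/p) * (∑ l ∈ T (i-1), singVal X l ^ p)^(q/p) := by
    intro i hi
    simp only [Finset.mem_Ico] at hi
    obtain ⟨i', rfl⟩ : ∃ i', i = i' + 2 := ⟨i - 2, by omega⟩
    have hi1 : i' + 2 - 1 = i' + 1 := by omega
    rw [hi1]
    rcases Finset.eq_empty_or_nonempty (T (i'+2)) with he | hne
    · rw [he]
      simp only [Finset.sum_empty]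
      rw [Real.zero_rpow (by positivity : q/2 ≠ 0)]
      exact mul_nonneg (Real.rpow_nonneg hsR.le _)
        (Real.rpow_nonneg (Finset.sum_nonneg fun l _ => Real.rpow_nonneg (hσnn l) p) _)
    · obtain ⟨j₀, hj₀⟩ := hne
      set t := ∑ l ∈ T (i'+1), singVal X l ^ p with ht
      have htnn : 0 ≤ t := Finset.sum_nonneg fun l _ => Real.rpow_nonneg (hσnn l) p
      have hj₀' : lo (i'+2) ≤ (j₀:ℕ) := by
        simp only [hT, Finset.mem_filter, Finset.mem_univ, true_and] at hj₀
        exact hj₀.1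
      have hloin : lo (i'+2) ≤ n := le_trans hj₀' (le_of_lt j₀.isLt)
      have hcardi1 : (T (i'+1)).card = s := by
        rw [hcard_eq (i'+1) hloin, hlosucc, hlosucc]
        have : (i'+1) * s = i' * s + s := by ring
        omega
      have hbound : ∀ j ∈ T (i'+2), singVal X j ^ (2:ℝ) ≤ (t / s) ^ ((2:ℝ)/p) := by
        intro j hj
        simp only [hT, Finset.mem_filter, Finset.mem_univ, true_and] at hj
        have hjp : (s:ℝ) * (singVal X j ^ p) ≤ t := by
          have hle : ∀ l ∈ T (i'+1), singVal X j ^ p ≤ singVal X l ^ p := by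
            intro l hl
            simp only [hT, Finset.mem_filter, Finset.mem_univ, true_and] at hl
            have hlj : l ≤ j := by
              rw [Fin.le_def]
              have h1 : (l:ℕ) < lo (i'+1+1) := hl.2
              have h2 : lo (i'+1+1) ≤ (j:ℕ) := by
                have : lo (i'+1+1) = lo (i'+2) := by norm_num
                rw [this]; exact hj.1
              omega
            exact Real.rpow_le_rpow (hσnn j) (singVal_antitone X hlj) hp.le
          have hc := Finset.card_nsmul_le_sum (T (i'+1)) _ _ hle
          rw [hcardi1, nsmul_eq_mul] at hc
          exact_mod_cast hc
        have hjp2 : singVal X j ^ p ≤ t / s := by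
          rw [le_div_iff₀ hsR]
          linarith
        calc singVal X j ^ (2:ℝ) = (singVal X j ^ p) ^ ((2:ℝ)/p) := by
              rw [← Real.rpow_mul (hσnn j)]
              congr 1
              field_simp
          _ ≤ (t/s) ^ ((2:ℝ)/p) :=
              Real.rpow_le_rpow (Real.rpow_nonneg (hσnn j) p) hjp2 (by positivity)
      have hsum : ∑ j ∈ T (i'+2), singVal X j ^ (2:ℝ) ≤ (s:ℝ) * (t/s) ^ ((2:ℝ)/p) := by
        calc ∑ j ∈ T (i'+2), singVal X j ^ (2:ℝ)
            ≤ ∑ _j ∈ T (i'+2), (t/s) ^ ((2:ℝ)/p) := Finset.sum_le_sum hbound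
          _ = ((T (i'+2)).card : ℝ) * (t/s) ^ ((2:ℝ)/p) := by
              rw [Finset.sum_const, nsmul_eq_mul]
          _ ≤ (s:ℝ) * (t/s)^((2:ℝ)/p) := by
              have hc := hcardTs (i'+2) (by omega)
              have hc' : ((T (i'+2)).card : ℝ) ≤ (s:ℝ) := by exact_mod_cast hc
              exact mul_le_mul_of_nonneg_right hc' (Real.rpow_nonneg (div_nonneg htnn hsR.le) _)
      calc (∑ j ∈ T (i'+2), singVal X j ^ (2:ℝ)) ^ (q/2)
          ≤ ((s:ℝ) * (t/s)^((2:ℝ)/p)) ^ (q/2) :=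
            Real.rpow_le_rpow
              (Finset.sum_nonneg fun j _ => Real.rpow_nonneg (hσnn j) _) hsum (by positivity)
        _ = (s:ℝ)^(q/2 - q/p) * t^(q/p) := by
            rw [Real.mul_rpow hsR.le (by positivity),
              ← Real.rpow_mul (by positivity : (0:ℝ) ≤ t/s)]
            have he : (2:ℝ)/p * (q/2) = q/p := by field_simp
            rw [he, Real.div_rpow htnn hsR.le, Real.rpow_sub hsR]
            field_simp
  -- tail bound
  have hF9 : ∑ i ∈ Finset.Ico 2 N, (∑ l ∈ T (i-1), singVal X l ^ p) ^ (q/p)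
      ≤ (tailP X r p) ^ (q/p) := by
    have hqp1 : (1:ℝ) ≤ q/p := (one_le_div hp).mpr hpq
    have h1 : ∑ i ∈ Finset.Ico 2 N, (∑ l ∈ T (i-1), singVal X l ^ p) ^ (q/p)
        ≤ (∑ i ∈ Finset.Ico 2 N, ∑ l ∈ T (i-1), singVal X l ^ p) ^ (q/p) :=
      sum_rpow_le_aux _ _
        (fun i _ => Finset.sum_nonneg fun l _ => Real.rpow_nonneg (hσnn l) p) hqp1
    refine le_trans h1 (Real.rpow_le_rpow
      (Finset.sum_nonneg fun i _ => Finset.sum_nonneg fun l _ => Real.rpow_nonneg (hσnn l) p)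
      ?_ (by positivity))
    have hdisj : (↑(Finset.Ico 2 N) : Set ℕ).PairwiseDisjoint (fun i => T (i-1)) := by
      intro a ha b hb hab
      simp only [Finset.coe_Ico, Set.mem_Ico] at ha hb
      rcases lt_or_gt_of_ne (show a - 1 ≠ b - 1 by omega) with h | h
      · exact hTdisj _ _ h
      · exact (hTdisj _ _ h).symm
    rw [← Finset.sum_biUnion hdisj]
    have hsub : (Finset.Ico 2 N).biUnion (fun i => T (i-1))
        ⊆ Finset.univ.filter (fun j : Fin n => r ≤ (j:ℕ)) := by
      intro j hj
      simp only [Finset.mem_biUnion, Finset.mem_Ico] at hj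
      obtain ⟨i, hi, hji⟩ := hj
      simp only [hT, Finset.mem_filter, Finset.mem_univ, true_and] at hji ⊢
      have h1' : lo 1 ≤ lo (i-1) := hlomono (show 1 ≤ i - 1 by omega)
      have h2' : lo 1 = r := by simpa using hlosucc 0
      omega
    unfold tailP
    exact Finset.sum_le_sum_of_subset_of_nonneg hsub
      (fun j _ _ => Real.rpow_nonneg (hσnn j) p)
  -- assemble
  have hT0eq : Finset.univ.filter (fun j : Fin n => (j:ℕ) < r) = T 0 := by
    ext j
    simp only [hT, Finset.mem_filter, Finset.mem_univ, true_and, hlo0]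
    rw [hlosucc]
    omega
  rw [hT0eq]
  set H := ∑ j ∈ T 0, singVal X j ^ (2:ℝ) with hHdef
  have hHnn : 0 ≤ H := Finset.sum_nonneg fun j _ => Real.rpow_nonneg (hσnn j) _
  set U := ∑ t, |A X t| ^ q with hU
  have hUnn : 0 ≤ U := Finset.sum_nonneg fun t _ => Real.rpow_nonneg (abs_nonneg _) _
  set G := tailP X r p with hG
  have hGnn : 0 ≤ G := Finset.sum_nonneg fun j _ => Real.rpow_nonneg (hσnn j) p
  have hbig : ∑ i ∈ Finset.Ico 2 N, ∑ t, |A (W i) t| ^ q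
      ≤ C₂ * L * ((s:ℝ)^(q/2 - q/p) * G^(q/p)) := by
    calc ∑ i ∈ Finset.Ico 2 N, ∑ t, |A (W i) t| ^ q
        ≤ ∑ i ∈ Finset.Ico 2 N, (C₂ * L * (s:ℝ)^(q/2-q/p)) *
            (∑ l ∈ T (i-1), singVal X l ^ p)^(q/p) := by
          refine Finset.sum_le_sum fun i hi => ?_
          calc ∑ t, |A (W i) t| ^ q
              ≤ C₂ * L * (∑ j ∈ T i, singVal X j ^ (2:ℝ)) ^ (q/2) := hW7 i hi
            _ ≤ C₂ * L * ((s:ℝ)^(q/2 - q/p) * (∑ l ∈ T (i-1), singVal X l ^ p)^(q/p)) :=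
                mul_le_mul_of_nonneg_left (hF8 i hi) (by positivity)
            _ = (C₂ * L * (s:ℝ)^(q/2-q/p)) * (∑ l ∈ T (i-1), singVal X l ^ p)^(q/p) := by
                ring
      _ = (C₂ * L * (s:ℝ)^(q/2-q/p)) * ∑ i ∈ Finset.Ico 2 N,
            (∑ l ∈ T (i-1), singVal X l ^ p)^(q/p) := by
          rw [Finset.mul_sum]
      _ ≤ (C₂ * L * (s:ℝ)^(q/2-q/p)) * G^(q/p) :=
          mul_le_mul_of_nonneg_left hF9 (by positivity)
      _ = C₂ * L * ((s:ℝ)^(q/2-q/p) * G^(q/p)) := by ring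
  have hnum : ∑ t, |A Z t| ^ q ≤ U + C₂ * L * ((s:ℝ)^(q/2 - q/p) * G^(q/p)) :=
    le_trans hsum6 (add_le_add le_rfl hbig)
  have hkey : C₁ * H ^ (q/2)
      ≤ (U + C₂ * L * ((s:ℝ)^(q/2 - q/p) * G^(q/p))) / L := by
    refine le_trans (le_trans (mul_le_mul_of_nonneg_left
      (Real.rpow_le_rpow hHnn hhead (by positivity)) hC₁.le) hZlow) ?_
    gcongr
  have hmain : H ^ (q/2) ≤ (C₁*(L:ℝ))⁻¹ * U + (C₂/C₁) * ((s:ℝ)^(q/2-q/p) * G^(q/p)) := by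
    have h1 : H ^ (q/2) = (C₁ * H ^ (q/2)) / C₁ := by field_simp
    rw [h1]
    calc (C₁ * H ^ (q/2)) / C₁
        ≤ ((U + C₂ * L * ((s:ℝ)^(q/2 - q/p) * G^(q/p))) / L) / C₁ := by
          gcongr
      _ = (C₁*(L:ℝ))⁻¹ * U + (C₂/C₁) * ((s:ℝ)^(q/2-q/p) * G^(q/p)) := by
          field_simp
  have hpq1 : p/q ≤ 1 := (div_le_one hq0).mpr hpq
  have hLHS : H^(p/2) = (H^(q/2))^(p/q) := by
    rw [← Real.rpow_mul hHnn]
    congr 1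
    field_simp
  have ha_eq : ((C₁*(L:ℝ))⁻¹ * U)^(p/q) = (C₁ * (L:ℝ))^(-(p/q)) * U^(p/q) := by
    rw [Real.mul_rpow (by positivity) hUnn, Real.inv_rpow (by positivity),
      Real.rpow_neg (by positivity)]
  have hb_eq : ((C₂/C₁) * ((s:ℝ)^(q/2-q/p) * G^(q/p)))^(p/q)
      = (C₂ / (C₁ * k ^ ((1/p - 1/2) * q)))^(p/q) * G / (r:ℝ)^((1/p-1/2)*p) := by
    rw [hs]
    exact hb_algebra k (r:ℝ) G C₁ C₂ p q hkpos hrR hGnn hC₁ hC₂ hp hq0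
  calc H ^ (p/2) = (H^(q/2))^(p/q) := hLHS
    _ ≤ ((C₁*(L:ℝ))⁻¹ * U + (C₂/C₁) * ((s:ℝ)^(q/2-q/p) * G^(q/p)))^(p/q) :=
        Real.rpow_le_rpow (Real.rpow_nonneg hHnn _) hmain (by positivity)
    _ ≤ ((C₁*(L:ℝ))⁻¹ * U)^(p/q) + ((C₂/C₁) * ((s:ℝ)^(q/2-q/p) * G^(q/p)))^(p/q) :=
        rpow_add_le_aux _ _ (mul_nonneg (by positivity) hUnn)
          (mul_nonneg (by positivity)
            (mul_nonneg (Real.rpow_nonneg hsR.le _) (Real.rpow_nonneg hGnn _)))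
          (by positivity) hpq1
    _ = _ := by rw [ha_eq, hb_eq]
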